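/- arXiv:1112.6255 — 3 statements merged into one kernel-verified Lean document; each statement's English description precedes it below -/
import Mathlib

section
/- Let (G,Λ,k,Z) be an untangled instance of Compression Group Feedback Vertex Set (all arcs with both endpoints outside Z have label 1_Σ). Let z ∈ Z, let H = F(G,Λ,Z,z) be the flow graph, and let v ∈ V(G)∖Z. If in H there are at least k+2 paths from v to Σ_z that are vertex-disjoint apart from v, then every set X ⊆ V(G)∖Z with |X| ≤ k such that (G∖X,Λ) has no non-null cycle must contain v. -/
/-- Product of edge labels along a list of vertices (consecutive pairs). -/
def chainProd {V G : Type*} [Group G] (Λ : V → V → G) : List V → G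
  | [] => 1
  | [_] => 1
  | u :: v :: rest => Λ u v * chainProd Λ (v :: rest)

/-- Adjacency of the flow graph `F(G,Λ,Z,z)`: the underlying undirected graph of
`G[V∖Z]`, plus a vertex for each group element `g ∈ Σ_z`, adjacent to all
`v ∈ V∖Z` with an arc `(z,v)` labeled `g`. -/
def flowAdj {V Γ : Type*} [Group Γ] (Arc : V → V → Prop) (Λ : V → V → Γ)
    (Z : Set V) (z : V) : (V ⊕ Γ) → (V ⊕ Γ) → Prop
  | Sum.inl u, Sum.inl w => u ≠ w ∧ u ∉ Z ∧ w ∉ Z ∧ Arc u w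
  | Sum.inl u, Sum.inr g => u ∉ Z ∧ Arc z u ∧ Λ z u = g
  | Sum.inr g, Sum.inl u => u ∉ Z ∧ Arc z u ∧ Λ z u = g
  | Sum.inr _, Sum.inr _ => False

lemma chainProd_glue {V G : Type*} [Group G] (Λ : V → V → G) :
    ∀ (A B : List V) (x : V), A.getLast? = some x → B.head? = some x →
      chainProd Λ (A ++ B.tail) = chainProd Λ A * chainProd Λ B := by
  intro A
  induction A with
  | nil => intro B x h; simp at h
  | cons a A ih =>
    intro B x hA hB
    cases A with
    | nil =>
      simp at hA
      cases B with
      | nil => simp at hB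
      | cons b B' =>
        simp at hB
        subst hA; subst hB
        simp [chainProd]
    | cons b R =>
      have hA' : (b :: R).getLast? = some x := by
        rw [List.getLast?_cons_cons] at hA; exact hA
      have h := ih B x hA' hB
      rw [List.cons_append] at h
      show Λ a b * chainProd Λ (b :: (R ++ B.tail)) =
        Λ a b * chainProd Λ (b :: R) * chainProd Λ B
      rw [h, mul_assoc]

lemma chain'_glue {α : Type*} {R : α → α → Prop} :
    ∀ (A B : List α) (x : α), List.Chain' R A → List.Chain' R B →
      A.getLast? = some x → B.head? = some x → List.Chain' R (A ++ B.tail) := by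
  intro A
  induction A with
  | nil => intro B x _ _ h; simp at h
  | cons a A ih =>
    intro B x hcA hcB hA hB
    cases A with
    | nil =>
      simp at hA
      cases B with
      | nil => simp at hB
      | cons b B' =>
        simp at hB
        subst hA; subst hB
        simpa using hcB
    | cons b R =>
      have hA' : (b :: R).getLast? = some x := by
        rw [List.getLast?_cons_cons] at hA; exact hA
      rw [List.Chain', List.isChain_cons_cons] at hcA
      simp only [List.cons_append]
      rw [List.Chain', List.isChain_cons_cons]
      exact ⟨hcA.1, ih B x hcA.2 hcB hA' hB⟩

lemma closed_walk_form {α : Type*} (L : List α) (v : α) (h1 : L.head? = some v)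
    (h2 : L.getLast? = some v) (hlen : 2 ≤ L.length) :
    ∃ rest, L = v :: rest ++ [v] := by
  cases L with
  | nil => simp at h1
  | cons a M =>
    simp at h1
    rw [h1] at h2 ⊢
    cases M with
    | nil => simp at hlen
    | cons b M' =>
      have hne : (b :: M') ≠ [] := by simp
      have h3 : (b :: M').getLast? = some v := by
        rw [List.getLast?_cons_cons] at h2; exact h2
      have h4 : (b :: M').getLast hne = v := by
        rw [List.getLast?_eq_getLast hne] at h3
        exact Option.some_injective _ h3
      have h5 := List.dropLast_append_getLast hne
      rw [h4] at h5
      refine ⟨(b :: M').dropLast, ?_⟩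
      show v :: (b :: M') = v :: ((b :: M').dropLast ++ [v])
      rw [h5]

lemma flowAdj_symm {V Γ : Type*} [Group Γ] {Arc : V → V → Prop} {Λ : V → V → Γ}
    {Z : Set V} {z : V} (hsymm : ∀ u v, Arc u v → Arc v u) :
    ∀ {a b : V ⊕ Γ}, flowAdj Arc Λ Z z a b → flowAdj Arc Λ Z z b a := by
  intro a b h
  cases a with
  | inl u =>
    cases b with
    | inl w => exact ⟨Ne.symm h.1, h.2.2.1, h.2.1, hsymm _ _ h.2.2.2⟩
    | inr g => exact h
  | inr g =>
    cases b with
    | inl u => exact h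
    | inr g' => exact h.elim

/-- Translating a flow-graph chain to a chain in `G` (Σ-vertices mapped to `z`). -/
lemma flow_chain_translate {V Γ : Type*} [Group Γ] {Arc : V → V → Prop} {Λ : V → V → Γ}
    {Z : Set V} {z : V} (hsymm : ∀ u v, Arc u v → Arc v u)
    {L : List (V ⊕ Γ)} (h : L.Chain' (flowAdj Arc Λ Z z)) :
    (L.map (Sum.elim id fun _ => z)).Chain' Arc := by
  rw [List.Chain', List.isChain_map]
  refine List.IsChain.imp ?_ h
  intro a b hab
  cases a with
  | inl u =>
    cases b with
    | inl w => exact hab.2.2.2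
    | inr g => exact hsymm _ _ hab.2.1
  | inr g =>
    cases b with
    | inl u => exact hab.2.1
    | inr g' => exact hab.elim

/-- The label of the translated walk telescopes. -/
lemma flow_chainProd {V Γ : Type*} [Group Γ] {Arc : V → V → Prop} {Λ : V → V → Γ}
    (hlab : ∀ u v, Arc u v → Λ u v = (Λ v u)⁻¹)
    {Z : Set V}
    (huntangled : ∀ u v, Arc u v → u ∉ Z → v ∉ Z → Λ u v = 1) (z : V) :
    ∀ (L : List (V ⊕ Γ)) (x y : V ⊕ Γ),
      L.Chain' (flowAdj Arc Λ Z z) → L.head? = some x → L.getLast? = some y →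
      chainProd Λ (L.map (Sum.elim id fun _ => z)) =
        (Sum.elim (fun _ => (1:Γ)) (fun g => g⁻¹) x)⁻¹ *
          Sum.elim (fun _ => (1:Γ)) (fun g => g⁻¹) y := by
  intro L
  induction L with
  | nil => intro x y _ h; simp at h
  | cons a M ih =>
    intro x y hc hx hy
    simp at hx
    subst hx
    cases M with
    | nil =>
      simp at hy
      subst hy
      simp [chainProd]
    | cons b R =>
      rw [List.Chain', List.isChain_cons_cons] at hc
      have hy' : (b :: R).getLast? = some y := by
        rw [List.getLast?_cons_cons] at hy; exact hy
      have hrec := ih b y hc.2 rfl hy'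
      have hadj := hc.1
      simp only [List.map_cons, chainProd] at hrec ⊢
      rw [hrec]
      have key : Λ (Sum.elim id (fun _ => z) a) (Sum.elim id (fun _ => z) b) =
          (Sum.elim (fun _ => (1:Γ)) (fun g => g⁻¹) a)⁻¹ *
            Sum.elim (fun _ => (1:Γ)) (fun g => g⁻¹) b := by
        cases a with
        | inl u =>
          cases b with
          | inl w =>
            obtain ⟨-, h1, h2, h3⟩ := hadj
            show Λ u w = (1:Γ)⁻¹ * 1
            rw [huntangled _ _ h3 h1 h2]; group
          | inr g =>
            obtain ⟨-, h1, h2⟩ := hadj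
            show Λ u z = (1:Γ)⁻¹ * g⁻¹
            rw [← h2, hlab z _ h1, inv_inv]; group
        | inr g =>
          cases b with
          | inl u =>
            obtain ⟨-, h1, h2⟩ := hadj
            show Λ z u = (g⁻¹)⁻¹ * 1
            rw [h2]; group
          | inr g' => exact hadj.elim
      rw [key]
      group

lemma two_le_length_of_ends {α β : Type*} (L : List (α ⊕ β)) (a : α) (b : β)
    (h1 : L.head? = some (Sum.inl a)) (h2 : L.getLast? = some (Sum.inr b)) :
    2 ≤ L.length := by
  match L with
  | [] => simp at h1
  | [x] =>
    simp at h1 h2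
    rw [h1] at h2
    exact absurd h2 (by simp)
  | x :: y :: R => simp

/-- Lemma 4: in an untangled instance, if in the flow graph `F(G,Λ,Z,z)` there are
at least `k+2` paths from `v` to `Σ_z` that are vertex-disjoint apart from `v`,
then `v` belongs to every solution of size at most `k`. -/
theorem forced_vertex {V Γ : Type*} [Fintype V] [DecidableEq V] [Group Γ]
    (Arc : V → V → Prop) (Λ : V → V → Γ)
    (hsymm : ∀ u v, Arc u v → Arc v u)
    (hlab : ∀ u v, Arc u v → Λ u v = (Λ v u)⁻¹)
    (Z : Set V)
    (hZsol : ∀ (a : V) (rest : List V), (∀ w ∈ a :: rest, w ∉ Z) →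
      List.Chain' Arc (a :: rest ++ [a]) → chainProd Λ (a :: rest ++ [a]) = 1)
    (huntangled : ∀ u v, Arc u v → u ∉ Z → v ∉ Z → Λ u v = 1)
    (z : V) (hz : z ∈ Z) (k : ℕ) (v : V) (hv : v ∉ Z)
    (P : Fin (k + 2) → List (V ⊕ Γ))
    (hP : ∀ i, (P i).Chain' (flowAdj Arc Λ Z z) ∧ (P i).Nodup ∧
      (P i).head? = some (Sum.inl v) ∧
      ∃ g : Γ, (P i).getLast? = some (Sum.inr g) ∧
        ∃ u, u ∉ Z ∧ Arc z u ∧ Λ z u = g)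
    (hdisj : ∀ i j, i ≠ j → ∀ w ∈ P i, w ∈ P j → w = Sum.inl v)
    (X : Finset V) (hXZ : ∀ x ∈ X, x ∉ Z) (hXk : X.card ≤ k)
    (hsol : ∀ (a : V) (rest : List V), (∀ w ∈ a :: rest, w ∉ X) →
      List.Chain' Arc (a :: rest ++ [a]) → chainProd Λ (a :: rest ++ [a]) = 1) :
    v ∈ X := by
  classical
  by_contra hvX
  -- Pigeonhole: at least two paths avoid X entirely.
  set bad : Finset (Fin (k + 2)) :=
    @Finset.filter _ (fun i => ∃ x ∈ X, Sum.inl x ∈ P i) (Classical.decPred _)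
      Finset.univ with hbaddef
  have hbadmem : ∀ i, i ∈ bad ↔ ∃ x ∈ X, Sum.inl x ∈ P i := by
    intro i
    rw [hbaddef]
    simp only [Finset.mem_filter, Finset.mem_univ, true_and]
  have hcard : bad.card ≤ X.card := by
    apply Finset.card_le_card_of_injOn
      (fun i => @dite V (∃ x ∈ X, Sum.inl x ∈ P i) (Classical.dec _)
        (fun h => h.choose) (fun _ => v))
    · intro i hi
      rw [Finset.mem_coe, hbadmem] at hi
      beta_reduce
      rw [dif_pos hi]
      exact hi.choose_spec.1
    · intro i hi j hj hf
      by_contra hij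
      rw [Finset.mem_coe, hbadmem] at hi hj
      simp only [dif_pos hi, dif_pos hj] at hf
      have h1 := hi.choose_spec
      have h2 := hj.choose_spec
      have hmemj : Sum.inl hi.choose ∈ P j := by rw [hf]; exact h2.2
      have := hdisj i j hij (Sum.inl hi.choose) h1.2 hmemj
      have : hi.choose = v := by injection this
      rw [this] at h1
      exact hvX h1.1
  have h2good : 1 < badᶜ.card := by
    have hcc : badᶜ.card = Fintype.card (Fin (k + 2)) - bad.card := Finset.card_compl bad
    rw [Fintype.card_fin] at hcc
    omega
  obtain ⟨i, hi, j, hj, hij⟩ := Finset.one_lt_card.mp h2good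
  have havoid : ∀ m, m ∈ badᶜ → ∀ u, Sum.inl u ∈ P m → u ∉ X := by
    intro m hm u hu huX
    rw [Finset.mem_compl, hbadmem] at hm
    exact hm ⟨u, huX, hu⟩
  -- Extract data of the two paths.
  obtain ⟨hci, _, hhi, gi, hgi, _⟩ := hP i
  obtain ⟨hcj, _, hhj, gj, hgj, _⟩ := hP j
  set tr : V ⊕ Γ → V := Sum.elim id (fun _ => z) with htr
  set A : List V := (P i).map tr with hA
  set B : List V := ((P j).reverse).map tr with hB
  -- Chains
  have hchainA : A.Chain' Arc := flow_chain_translate hsymm hci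
  have hcjrev : ((P j).reverse).Chain' (flowAdj Arc Λ Z z) := by
    rw [List.Chain', List.isChain_reverse]
    exact List.IsChain.imp (fun _ _ h => flowAdj_symm hsymm h) hcj
  have hchainB : B.Chain' Arc := flow_chain_translate hsymm hcjrev
  -- endpoints
  have hAhead : A.head? = some v := by
    rw [hA, List.head?_map, hhi]; rfl
  have hAlast : A.getLast? = some z := by
    rw [hA, List.getLast?_map, hgi]; rfl
  have hrevhead : ((P j).reverse).head? = some (Sum.inr gj) := by
    rw [List.head?_reverse]; exact hgj
  have hrevlast : ((P j).reverse).getLast? = some (Sum.inl v) := by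
    rw [List.getLast?_reverse]; exact hhj
  have hBhead : B.head? = some z := by
    rw [hB, List.head?_map, hrevhead]; rfl
  have hBlast : B.getLast? = some v := by
    rw [hB, List.getLast?_map, hrevlast]; rfl
  -- lengths
  have hlenPi : 2 ≤ (P i).length := two_le_length_of_ends _ v gi hhi hgi
  have hlenPj : 2 ≤ (P j).length := two_le_length_of_ends _ v gj hhj hgj
  have hlenA : 2 ≤ A.length := by rw [hA, List.length_map]; exact hlenPi
  have hlenB : 2 ≤ B.length := by
    rw [hB, List.length_map, List.length_reverse]; exact hlenPj
  -- the glued closed walk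
  set W : List V := A ++ B.tail with hW
  have hWchain : W.Chain' Arc := chain'_glue A B z hchainA hchainB hAlast hBhead
  have hWhead : W.head? = some v := by
    rw [hW, List.head?_append, hAhead]; rfl
  have hWlast : W.getLast? = some v := by
    rcases hBt : B with _ | ⟨b, B'⟩
    · rw [hBt] at hlenB; simp at hlenB
    · rcases B' with _ | ⟨c, B''⟩
      · rw [hBt] at hlenB; simp at hlenB
      · have hBl : (c :: B'').getLast? = some v := by
          rw [hBt, List.getLast?_cons_cons] at hBlast; exact hBlast
        rw [hW, hBt]
        simp only [List.tail_cons]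
        rw [List.getLast?_append_of_ne_nil _ (List.cons_ne_nil c B'')]
        exact hBl
  have hWlen : 2 ≤ W.length := by
    rw [hW, List.length_append]; omega
  obtain ⟨rest, hrest⟩ := closed_walk_form W v hWhead hWlast hWlen
  -- every vertex of W avoids X
  have hzX : z ∉ X := fun h => hXZ z h hz
  have hWX : ∀ w ∈ W, w ∉ X := by
    intro w hw
    rw [hW] at hw
    rcases List.mem_append.mp hw with h | h
    · rw [hA] at h
      obtain ⟨s, hs, hsw⟩ := List.mem_map.mp h
      cases s with
      | inl u => rw [← hsw]; exact havoid i hi u hs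
      | inr g => rw [← hsw]; exact hzX
    · have h' : w ∈ B := List.mem_of_mem_tail h
      rw [hB] at h'
      obtain ⟨s, hs, hsw⟩ := List.mem_map.mp h'
      rw [List.mem_reverse] at hs
      cases s with
      | inl u => rw [← hsw]; exact havoid j hj u hs
      | inr g => rw [← hsw]; exact hzX
  -- apply the solution property
  have hmem : ∀ w ∈ v :: rest, w ∉ X := by
    intro w hw
    apply hWX
    rw [hrest]
    rcases List.mem_cons.mp hw with h | h
    · rw [h]; simp
    · simp [h]
  have hchain' : List.Chain' Arc (v :: rest ++ [v]) := by rw [← hrest]; exact hWchain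
  have hone := hsol v rest hmem hchain'
  rw [← hrest] at hone
  -- compute chainProd W
  have hprodA : chainProd Λ A = gi⁻¹ := by
    have := flow_chainProd hlab huntangled z (P i) (Sum.inl v) (Sum.inr gi) hci hhi hgi
    rw [hA, htr]
    rw [this]
    simp
  have hprodB : chainProd Λ B = gj := by
    have := flow_chainProd hlab huntangled z ((P j).reverse) (Sum.inr gj) (Sum.inl v)
      hcjrev hrevhead hrevlast
    rw [hB, htr]
    rw [this]
    simp
  have hprodW : chainProd Λ W = gi⁻¹ * gj := by
    rw [hW, chainProd_glue Λ A B z hAlast hBhead, hprodA, hprodB]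
  rw [hprodW] at hone
  have hgij : gi = gj := by
    have h := mul_eq_one_iff_eq_inv.mp hone
    exact inv_injective h
  -- contradiction with disjointness
  have hmi : Sum.inr gi ∈ P i := by
    have hne : P i ≠ [] := by
      intro h; rw [h] at hgi; simp at hgi
    rw [List.getLast?_eq_getLast hne] at hgi
    have := Option.some_injective _ hgi
    rw [← this]
    exact List.getLast_mem hne
  have hmj : Sum.inr gi ∈ P j := by
    have hne : P j ≠ [] := by
      intro h; rw [h] at hgj; simp at hgj
    rw [List.getLast?_eq_getLast hne] at hgj
    have := Option.some_injective _ hgj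
    rw [hgij, ← this]
    exact List.getLast_mem hne
  have := hdisj i j hij (Sum.inr gi) hmi hmj
  exact absurd this (by simp)
end

section
/- Let (G,Λ,k,Z) be an untangled instance of Compression GFVS and suppose that for each z ∈ Z and each v ∈ V(G)∖Z there are at most k+1 paths from v to Σ_z in the flow graph F(G,Λ,Z,z) that are vertex-disjoint apart from v. If for some distinct z₁, z₂ ∈ Z the set Σ(z₁,z₂) of labels of external paths from z₁ to z₂ has size at least k³(k+1)²+2, then there is no set X ⊆ V(G)∖Z with |X| ≤ k such that (G∖X,Λ) has no non-null cycle. -/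
/-- `Σ(z₁,z₂)`: labels of external paths from `z₁` to `z₂` (paths with endpoints
in `Z` and all internal vertices outside `Z`). -/
def extLabels {V Γ : Type*} [Group Γ] (Arc : V → V → Prop) (Λ : V → V → Γ)
    (Z : Set V) (z₁ z₂ : V) : Set Γ :=
  {g : Γ | ∃ l : List V, (∀ u ∈ l, u ∉ Z) ∧
    List.Chain' Arc (z₁ :: l ++ [z₂]) ∧ (z₁ :: l ++ [z₂]).Nodup ∧
    chainProd Λ (z₁ :: l ++ [z₂]) = g}

section AuxChainProd
variable {V Γ : Type*} [Group Γ] {Arc : V → V → Prop} {Λ : V → V → Γ}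

lemma chainProd_nil : chainProd Λ ([] : List V) = 1 := rfl
lemma chainProd_single (u : V) : chainProd Λ [u] = 1 := rfl
lemma chainProd_cons_cons (u v : V) (l : List V) :
    chainProd Λ (u :: v :: l) = Λ u v * chainProd Λ (v :: l) := rfl

lemma chainProd_append_cons (Λ : V → V → Γ) (l₁ : List V) (w : V) (l₂ : List V) :
    chainProd Λ (l₁ ++ w :: l₂) = chainProd Λ (l₁ ++ [w]) * chainProd Λ (w :: l₂) := by
  induction l₁ with
  | nil => simp [chainProd_single]
  | cons a t ih =>
    cases t with
    | nil => simp [chainProd_cons_cons, chainProd_single, chainProd_nil, mul_assoc]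
    | cons b t' =>
      simp only [List.cons_append, chainProd_cons_cons]
      rw [show b :: (t' ++ [w]) = b :: t' ++ [w] from rfl, ← List.cons_append, ih, mul_assoc]

lemma chainProd_concat (Λ : V → V → Γ) :
    ∀ (l : List V) (b w : V), l.getLast? = some b →
      chainProd Λ (l ++ [w]) = chainProd Λ l * Λ b w
  | [], b, w, h => by simp at h
  | [a], b, w, h => by
      simp at h; subst h; simp [chainProd_cons_cons, chainProd_single, chainProd_nil]
  | a :: c :: t, b, w, h => by
      have h' : (c :: t).getLast? = some b := by
        rw [List.getLast?_cons_cons] at h; exact h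
      simp only [List.cons_append, chainProd_cons_cons]
      rw [show c :: (t ++ [w]) = (c :: t) ++ [w] from rfl,
        chainProd_concat Λ (c :: t) b w h', ← mul_assoc]

lemma chainProd_reverse (hlab : ∀ u v, Arc u v → Λ u v = (Λ v u)⁻¹) :
    ∀ (l : List V), List.Chain' Arc l → chainProd Λ l.reverse = (chainProd Λ l)⁻¹
  | [], _ => by simp [chainProd_nil]
  | [a], _ => by simp [chainProd_single]
  | a :: c :: t, h => by
      have harc : Arc a c := List.isChain_cons_cons.1 h |>.1
      have hch : List.Chain' Arc (c :: t) := List.isChain_cons_cons.1 h |>.2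
      have hrev : (a :: c :: t).reverse = (c :: t).reverse ++ [a] := by simp
      rw [hrev, chainProd_concat Λ _ c a (by simp [List.getLast?_reverse]),
        chainProd_reverse hlab (c :: t) hch, chainProd_cons_cons, mul_inv_rev]
      congr 1
      rw [hlab a c harc, inv_inv]

lemma chainProd_ones {Z : Set V} (huntangled : ∀ u v, Arc u v → u ∉ Z → v ∉ Z → Λ u v = 1) :
    ∀ (l : List V), List.Chain' Arc l → (∀ v ∈ l, v ∉ Z) → chainProd Λ l = 1
  | [], _, _ => rfl
  | [a], _, _ => rfl
  | a :: c :: t, h, hm => by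
      have harc : Arc a c := List.isChain_cons_cons.1 h |>.1
      rw [chainProd_cons_cons,
        huntangled a c harc (hm a (by simp)) (hm c (by simp)),
        chainProd_ones huntangled (c :: t) (List.isChain_cons_cons.1 h).2
          (fun v hv => hm v (by simp [hv])), one_mul]

lemma chain'_reverse_arc (hsymm : ∀ u v, Arc u v → Arc v u) {l : List V}
    (h : List.Chain' Arc l) : List.Chain' Arc l.reverse :=
  List.isChain_reverse.2 (h.imp fun a b hab => hsymm a b hab)

end AuxChainProd

section Walk
variable {V Γ : Type*} [Group Γ] {Arc : V → V → Prop} {Λ : V → V → Γ}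

lemma walk_label_unique (hsymm : ∀ u v, Arc u v → Arc v u)
    (hlab : ∀ u v, Arc u v → Λ u v = (Λ v u)⁻¹) (X : Finset V)
    (hsol : ∀ (a : V) (rest : List V), (∀ w ∈ a :: rest, w ∉ X) →
      List.Chain' Arc (a :: rest ++ [a]) → chainProd Λ (a :: rest ++ [a]) = 1)
    (u w : V) (hu : u ∉ X) (hw : w ∉ X) (p₀ q₀ : List V)
    (hpX : ∀ v ∈ p₀, v ∉ X) (hqX : ∀ v ∈ q₀, v ∉ X)
    (hpc : List.Chain' Arc (u :: p₀ ++ [w])) (hqc : List.Chain' Arc (u :: q₀ ++ [w])) :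
    chainProd Λ (u :: p₀ ++ [w]) = chainProd Λ (u :: q₀ ++ [w]) := by
  set P : List V := u :: p₀ ++ [w] with hP
  set Q : List V := u :: q₀ ++ [w] with hQ
  have hQrev : Q.reverse = w :: (q₀.reverse ++ [u]) := by simp [hQ]
  have hL : (u :: (p₀ ++ w :: q₀.reverse) ++ [u] : List V)
      = (u :: p₀) ++ (w :: (q₀.reverse ++ [u])) := by simp
  have hp1 : List.Chain' Arc (u :: p₀) ∧
      ∀ x ∈ (u :: p₀).getLast?, ∀ y ∈ ([w] : List V).head?, Arc x y := by
    have := List.isChain_append.1 (show List.Chain' Arc ((u :: p₀) ++ [w]) from hpc)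
    exact ⟨this.1, this.2.2⟩
  have hQrc : List.Chain' Arc (w :: (q₀.reverse ++ [u])) := by
    rw [← hQrev]; exact chain'_reverse_arc hsymm hqc
  have hchainL : List.Chain' Arc (u :: (p₀ ++ w :: q₀.reverse) ++ [u]) := by
    rw [hL]
    refine List.isChain_append.2 ⟨hp1.1, hQrc, ?_⟩
    intro x hx y hy
    simp only [List.head?_cons, Option.mem_def, Option.some_inj] at hy
    subst hy
    exact hp1.2 x hx w (by simp)
  have hmem : ∀ v ∈ u :: (p₀ ++ w :: q₀.reverse), v ∉ X := by
    intro v hv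
    simp only [List.mem_cons, List.mem_append, List.mem_reverse] at hv
    rcases hv with rfl | h | rfl | h
    · exact hu
    · exact hpX v h
    · exact hw
    · exact hqX v h
  have hzero := hsol u (p₀ ++ w :: q₀.reverse) hmem hchainL
  have hsplit : chainProd Λ (u :: (p₀ ++ w :: q₀.reverse) ++ [u])
      = chainProd Λ P * (chainProd Λ Q)⁻¹ := by
    rw [hL, show (u :: p₀) ++ (w :: (q₀.reverse ++ [u]))
        = (u :: p₀) ++ w :: (q₀.reverse ++ [u]) from rfl,
      chainProd_append_cons, ← hQrev, chainProd_reverse hlab Q hqc]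
  rw [hsplit] at hzero
  exact mul_inv_eq_one.1 hzero

end Walk

section Reach
variable {V Γ : Type*} [Group Γ] {Arc : V → V → Prop} {Λ : V → V → Γ}

/-- A path witnessing that label `Λ z a` is reachable from `x`:
a path from `a` to `x` outside `Z`, avoiding `X` except possibly at `x`,
with `a` a neighbour of `z`. -/
def ReachP (Arc : V → V → Prop) (Z : Set V) (X : Finset V) (z x a : V) : Prop :=
  ∃ p : List V, p.head? = some a ∧ p.getLast? = some x ∧ List.Chain' Arc p ∧
    p.Nodup ∧ (∀ v ∈ p, v ∉ Z) ∧ (∀ v ∈ p.dropLast, v ∉ X) ∧ Arc z a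

/-- Extract a clean prefix of a reach-path ending at a shared vertex `u ≠ x`. -/
lemma reach_prefix {Z : Set V} {X : Finset V} {x a u : V} {p : List V}
    (hhead : p.head? = some a) (hlast : p.getLast? = some x)
    (hchain : List.Chain' Arc p) (hnd : p.Nodup)
    (hZ : ∀ v ∈ p, v ∉ Z) (hX : ∀ v ∈ p.dropLast, v ∉ X)
    (hu : u ∈ p) (hux : u ≠ x) :
    ∃ s : List V, (s ++ [u]).head? = some a ∧ List.Chain' Arc (s ++ [u]) ∧
      (∀ v ∈ s ++ [u], v ∉ Z) ∧ (∀ v ∈ s ++ [u], v ∉ X) := by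
  obtain ⟨s, t, rfl⟩ := List.append_of_mem hu
  have hdrop : (s ++ u :: t).dropLast ++ [x] = s ++ u :: t :=
    List.dropLast_append_getLast? x hlast
  have hxnot : x ∉ (s ++ u :: t).dropLast := by
    have := hnd
    rw [← hdrop] at this
    have := List.disjoint_of_nodup_append this
    intro hxx
    exact this hxx (by simp)
  have hmemdrop : ∀ v, v ∈ s ++ u :: t → v ≠ x → v ∈ (s ++ u :: t).dropLast := by
    intro v hv hvx
    rw [← hdrop] at hv
    rcases List.mem_append.1 hv with h | h
    · exact h
    · simp at h; exact absurd h hvx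
  have hsub : ∀ v ∈ s ++ [u], v ∈ s ++ u :: t := by
    intro v hv; rcases List.mem_append.1 hv with h | h
    · exact List.mem_append.2 (Or.inl h)
    · simp at h; subst h; simp
  have hsdrop : ∀ v ∈ s, v ∈ (s ++ u :: t).dropLast := by
    intro v hv
    apply hmemdrop v (by simp [hv])
    intro h; subst h; exact hxnot (by
      rcases List.eq_nil_or_concat t with rfl | ⟨t', b, rfl⟩
      · exact absurd (by simpa using hlast) hux
      · simp only [List.concat_eq_append] at *
        have : (s ++ u :: (t' ++ [b])).dropLast = s ++ u :: t' := by
          rw [show s ++ u :: (t' ++ [b]) = (s ++ u :: t') ++ [b] by simp]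
          exact List.dropLast_concat
        rw [this]; simp [hv])
  refine ⟨s, ?_, ?_, fun v hv => hZ v (hsub v hv), ?_⟩
  · cases s with
    | nil => simpa using hhead
    | cons c s' => simpa using hhead
  · have : List.Chain' Arc ((s ++ [u]) ++ t) := by simpa using hchain
    exact (List.isChain_append.1 this).1
  · intro v hv
    rcases List.mem_append.1 hv with h | h
    · exact hX v (hsdrop v h)
    · simp at h; subst h
      exact hX v (hmemdrop v (by simp) hux)

/-- Key: two reach-paths to `x` carrying different labels can only meet at `x`. -/
lemma reach_meet_label_eq {Z : Set V} {X : Finset V}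
    (hsymm : ∀ u v, Arc u v → Arc v u)
    (hlab : ∀ u v, Arc u v → Λ u v = (Λ v u)⁻¹)
    (huntangled : ∀ u v, Arc u v → u ∉ Z → v ∉ Z → Λ u v = 1)
    (hsol : ∀ (a : V) (rest : List V), (∀ w ∈ a :: rest, w ∉ X) →
      List.Chain' Arc (a :: rest ++ [a]) → chainProd Λ (a :: rest ++ [a]) = 1)
    {z x a a' u : V} (hz : z ∉ X)
    {p q : List V}
    (hp1 : p.head? = some a) (hp2 : p.getLast? = some x) (hp3 : List.Chain' Arc p)
    (hp4 : p.Nodup) (hp5 : ∀ v ∈ p, v ∉ Z) (hp6 : ∀ v ∈ p.dropLast, v ∉ X) (hp7 : Arc z a)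
    (hq1 : q.head? = some a') (hq2 : q.getLast? = some x) (hq3 : List.Chain' Arc q)
    (hq4 : q.Nodup) (hq5 : ∀ v ∈ q, v ∉ Z) (hq6 : ∀ v ∈ q.dropLast, v ∉ X) (hq7 : Arc z a')
    (hup : u ∈ p) (huq : u ∈ q) (hux : u ≠ x) :
    Λ z a = Λ z a' := by
  obtain ⟨s, hh, hc, hsZ, hsX⟩ := reach_prefix hp1 hp2 hp3 hp4 hp5 hp6 hup hux
  obtain ⟨s', hh', hc', hsZ', hsX'⟩ := reach_prefix hq1 hq2 hq3 hq4 hq5 hq6 huq hux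
  have huX : u ∉ X := hsX u (by simp)
  have chain1 : List.Chain' Arc (z :: s ++ [u]) := by
    rw [List.cons_append, show List.Chain' _ _ ↔ _ from List.isChain_cons]
    refine ⟨fun y hy => ?_, hc⟩
    rw [hh] at hy; simp at hy; subst hy; exact hp7
  have chain2 : List.Chain' Arc (z :: s' ++ [u]) := by
    rw [List.cons_append, show List.Chain' _ _ ↔ _ from List.isChain_cons]
    refine ⟨fun y hy => ?_, hc'⟩
    rw [hh'] at hy; simp at hy; subst hy; exact hq7
  have heq := walk_label_unique hsymm hlab X hsol z u hz huX s s'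
    (fun v hv => hsX v (by simp [hv])) (fun v hv => hsX' v (by simp [hv])) chain1 chain2
  have hval : ∀ (m : List V) (b : V), (m ++ [u]).head? = some b →
      List.Chain' Arc (m ++ [u]) → (∀ v ∈ m ++ [u], v ∉ Z) →
      chainProd Λ (z :: m ++ [u]) = Λ z b := by
    intro m b hhb hcb hZb
    obtain ⟨rest, hr⟩ : ∃ rest, m ++ [u] = b :: rest := by
      cases hm : m ++ [u] with
      | nil => simp [hm] at hhb
      | cons c r => rw [hm] at hhb; simp at hhb; exact ⟨r, by rw [hhb]⟩
    rw [List.cons_append, hr, chainProd_cons_cons]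
    rw [← hr, chainProd_ones huntangled _ hcb hZb, mul_one]
  rw [hval s a hh hc hsZ, hval s' a' hh' hc' hsZ'] at heq
  exact heq

lemma chain'_flow_map {Z : Set V} (z : V) :
    ∀ m : List V, List.Chain' Arc m → m.Nodup → (∀ v ∈ m, v ∉ Z) →
      List.Chain' (flowAdj Arc Λ Z z) (m.map Sum.inl)
  | [], _, _, _ => by simp; exact List.isChain_nil
  | [a], _, _, _ => by simp; exact List.isChain_singleton _
  | a :: b :: t, hc, hnd, hm => by
    rw [List.map_cons, List.map_cons, show List.Chain' _ _ ↔ _ from List.isChain_cons_cons]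
    refine ⟨⟨?_, hm a (by simp), hm b (by simp), (List.isChain_cons_cons.1 hc).1⟩, ?_⟩
    · intro h; subst h; simp at hnd
    · rw [← List.map_cons]
      exact chain'_flow_map z (b :: t) (List.isChain_cons_cons.1 hc).2 hnd.of_cons
        (fun v hv => hm v (by simp [List.mem_cons] at hv ⊢; tauto))

/-- There cannot be `k+2` distinct labels reachable from `x`, because the
witnessing paths would give `k+2` paths in the flow graph that are
vertex-disjoint apart from `x`. -/
lemma no_many_reach_labels {Z : Set V} {X : Finset V}
    (hsymm : ∀ u v, Arc u v → Arc v u)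
    (hlab : ∀ u v, Arc u v → Λ u v = (Λ v u)⁻¹)
    (huntangled : ∀ u v, Arc u v → u ∉ Z → v ∉ Z → Λ u v = 1)
    (hsol : ∀ (a : V) (rest : List V), (∀ w ∈ a :: rest, w ∉ X) →
      List.Chain' Arc (a :: rest ++ [a]) → chainProd Λ (a :: rest ++ [a]) = 1)
    (k : ℕ) (z x : V) (hz : z ∉ X)
    (hflowzx : ¬ ∃ P : Fin (k + 2) → List (V ⊕ Γ),
        (∀ i, (P i).Chain' (flowAdj Arc Λ Z z) ∧ (P i).Nodup ∧
          (P i).head? = some (Sum.inl x) ∧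
          ∃ g : Γ, (P i).getLast? = some (Sum.inr g) ∧
            ∃ u, u ∉ Z ∧ Arc z u ∧ Λ z u = g) ∧
        (∀ i j, i ≠ j → ∀ w ∈ P i, w ∈ P j → w = Sum.inl x))
    (g : Fin (k + 2) → Γ) (hg : Function.Injective g)
    (hreach : ∀ i, ∃ a, Λ z a = g i ∧ ReachP Arc Z X z x a) :
    False := by
  choose a hga hrp using hreach
  choose p hp1 hp2 hp3 hp4 hp5 hp6 hp7 using hrp
  apply hflowzx
  refine ⟨fun i => ((p i).reverse.map Sum.inl) ++ [Sum.inr (g i)], fun i => ?_, ?_⟩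
  · have i1 := hp1 i; have i2 := hp2 i; have i3 := hp3 i; have i4 := hp4 i
    have i5 := hp5 i; have i7 := hp7 i
    have hpne : p i ≠ [] := by intro h; rw [h] at i1; simp at i1
    have haZ : a i ∉ Z := by
      apply i5
      cases hp : p i with
      | nil => exact absurd hp hpne
      | cons c r => rw [hp] at i1; simp at i1; simp [hp, i1]
    have hAlast : ((p i).reverse.map (Sum.inl : V → V ⊕ Γ)).getLast?
        = some (Sum.inl (a i)) := by
      rw [← List.head?_reverse, ← List.map_reverse, List.reverse_reverse, List.head?_map, i1]
      rfl
    refine ⟨?_, ?_, ?_, g i, ?_, a i, haZ, i7, hga i⟩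
    · refine List.isChain_append.2 ⟨?_, by simp, ?_⟩
      · exact chain'_flow_map z (p i).reverse (chain'_reverse_arc hsymm i3)
          (List.nodup_reverse.2 i4) (fun v hv => i5 v (List.mem_reverse.1 hv))
      · intro y hy w hw
        simp only [List.head?_cons, Option.mem_def, Option.some_inj] at hw
        rw [hAlast] at hy
        simp at hy
        subst hy; subst hw
        exact ⟨haZ, i7, hga i⟩
    · rw [List.nodup_append]
      refine ⟨(List.nodup_reverse.2 i4).map (Sum.inl_injective), by simp, ?_⟩
      intro w hw
      rcases List.mem_map.1 hw with ⟨v, _, rfl⟩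
      simp
    · rw [List.head?_append]
      have : ((p i).reverse.map (Sum.inl : V → V ⊕ Γ)).head? = some (Sum.inl x) := by
        rw [List.head?_map, List.head?_reverse, i2]; rfl
      rw [this]; rfl
    · exact List.getLast?_concat
  · intro i j hij w hwi hwj
    match w with
    | Sum.inr h =>
      exfalso
      have hgi : h = g i := by
        rcases List.mem_append.1 hwi with hm | hm
        · rcases List.mem_map.1 hm with ⟨v, _, hv⟩; exact absurd hv (by simp)
        · simpa using hm
      have hgj : h = g j := by
        rcases List.mem_append.1 hwj with hm | hm
        · rcases List.mem_map.1 hm with ⟨v, _, hv⟩; exact absurd hv (by simp)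
        · simpa using hm
      exact hij (hg (hgi ▸ hgj))
    | Sum.inl v =>
      have hvp : v ∈ p i := by
        rcases List.mem_append.1 hwi with hm | hm
        · rcases List.mem_map.1 hm with ⟨v', hv', hveq⟩
          cases hveq; exact List.mem_reverse.1 hv'
        · simp at hm
      have hvq : v ∈ p j := by
        rcases List.mem_append.1 hwj with hm | hm
        · rcases List.mem_map.1 hm with ⟨v', hv', hveq⟩
          cases hveq; exact List.mem_reverse.1 hv'
        · simp at hm
      by_cases hvx : v = x
      · rw [hvx]
      · exfalso
        apply hij
        apply hg
        rw [← hga i, ← hga j]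
        exact reach_meet_label_eq hsymm hlab huntangled hsol hz
          (hp1 i) (hp2 i) (hp3 i) (hp4 i) (hp5 i) (hp6 i) (hp7 i)
          (hp1 j) (hp2 j) (hp3 j) (hp4 j) (hp5 j) (hp6 j) (hp7 j)
          hvp hvq hvx

end Reach

section Decomp

/-- Decompose a list at its first element belonging to `X`. -/
lemma exists_first_mem {α : Type*} [DecidableEq α] (X : Finset α) :
    ∀ l : List α, (∃ v ∈ l, v ∈ X) →
      ∃ s x t, l = s ++ x :: t ∧ x ∈ X ∧ ∀ v ∈ s, v ∉ X
  | [], h => by simp at h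
  | c :: r, h => by
    by_cases hc : c ∈ X
    · exact ⟨[], c, r, by simp, hc, by simp⟩
    · obtain ⟨v, hv, hvX⟩ := h
      have hvr : v ∈ r := by
        rcases List.mem_cons.1 hv with rfl | hr
        · exact absurd hvX hc
        · exact hr
      obtain ⟨s, x, t, hdec, hxX, hsX⟩ := exists_first_mem X r ⟨v, hvr, hvX⟩
      exact ⟨c :: s, x, t, by simp [hdec], hxX, by
        intro w hw
        rcases List.mem_cons.1 hw with rfl | hws
        · exact hc
        · exact hsX w hws⟩

end Decomp

/-- Lemma 6: in an untangled instance, if every `v ∉ Z` has at most `k+1`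
paths to `Σ_z` in every flow graph that are vertex-disjoint apart from `v`,
and `|Σ(z₁,z₂)| ≥ k³(k+1)²+2` for some distinct `z₁,z₂ ∈ Z`, then no solution
of size at most `k` exists. -/
theorem no_solution_many_external_labels {V Γ : Type*} [Fintype V] [DecidableEq V] [Group Γ]
    (Arc : V → V → Prop) (Λ : V → V → Γ)
    (hsymm : ∀ u v, Arc u v → Arc v u)
    (hlab : ∀ u v, Arc u v → Λ u v = (Λ v u)⁻¹)
    (Z : Set V) (k : ℕ)
    (hZsol : ∀ (a : V) (rest : List V), (∀ w ∈ a :: rest, w ∉ Z) →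
      List.Chain' Arc (a :: rest ++ [a]) → chainProd Λ (a :: rest ++ [a]) = 1)
    (huntangled : ∀ u v, Arc u v → u ∉ Z → v ∉ Z → Λ u v = 1)
    (hflow : ∀ z ∈ Z, ∀ v, v ∉ Z →
      ¬ ∃ P : Fin (k + 2) → List (V ⊕ Γ),
        (∀ i, (P i).Chain' (flowAdj Arc Λ Z z) ∧ (P i).Nodup ∧
          (P i).head? = some (Sum.inl v) ∧
          ∃ g : Γ, (P i).getLast? = some (Sum.inr g) ∧
            ∃ u, u ∉ Z ∧ Arc z u ∧ Λ z u = g) ∧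
        (∀ i j, i ≠ j → ∀ w ∈ P i, w ∈ P j → w = Sum.inl v))
    (z₁ z₂ : V) (hz₁ : z₁ ∈ Z) (hz₂ : z₂ ∈ Z) (hne : z₁ ≠ z₂)
    (hbig : ∃ f : Fin (k ^ 3 * (k + 1) ^ 2 + 2) → Γ, Function.Injective f ∧
      ∀ i, f i ∈ extLabels Arc Λ Z z₁ z₂) :
    ¬ ∃ X : Finset V, (∀ x ∈ X, x ∉ Z) ∧ X.card ≤ k ∧
      ∀ (a : V) (rest : List V), (∀ w ∈ a :: rest, w ∉ X) →
        List.Chain' Arc (a :: rest ++ [a]) → chainProd Λ (a :: rest ++ [a]) = 1 := by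
  rintro ⟨X, hXZ, hXcard, hsol⟩
  obtain ⟨f, hfinj, hfmem⟩ := hbig
  classical
  have hz₁X : z₁ ∉ X := fun h => hXZ z₁ h hz₁
  have hz₂X : z₂ ∉ X := fun h => hXZ z₂ h hz₂
  -- the finsets of labels reachable from a given cut vertex
  set Gx : V → Finset Γ := fun x =>
    (Finset.univ.filter (fun a => ReachP Arc Z X z₁ x a)).image (fun a => Λ z₁ a) with hGx
  set Hy : V → Finset Γ := fun y =>
    (Finset.univ.filter (fun b => ReachP Arc Z X z₂ y b)).image (fun b => (Λ z₂ b)⁻¹) with hHy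
  -- cardinality bounds from the flow-graph hypothesis
  have hcard_gen : ∀ (z : V), z ∈ Z → ∀ x ∈ X, ∀ (F : Γ → Γ), Function.Injective F →
      ((Finset.univ.filter (fun a => ReachP Arc Z X z x a)).image
        (fun a => F (Λ z a))).card ≤ k + 1 := by
    intro z hz x hx F hF
    by_contra hlt
    push_neg at hlt
    have hk2 : k + 2 ≤ ((Finset.univ.filter (fun a => ReachP Arc Z X z x a)).image
        (fun a => F (Λ z a))).card := hlt
    obtain ⟨t, hts, htcard⟩ := Finset.exists_subset_card_eq hk2
    set e := t.equivFinOfCardEq htcard with he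
    set g : Fin (k + 2) → Γ := fun i => (e.symm i : Γ) with hg
    have hginj : Function.Injective g := by
      intro i j hij
      apply e.symm.injective
      exact Subtype.ext hij
    have hgmem : ∀ i, ∃ a, F (Λ z a) = g i ∧ ReachP Arc Z X z x a := by
      intro i
      have : g i ∈ t := (e.symm i).2
      have := hts this
      rcases Finset.mem_image.1 this with ⟨a, ha, hfa⟩
      exact ⟨a, hfa, (Finset.mem_filter.1 ha).2⟩
    -- transport along F⁻¹: consider labels g' := pre-images
    choose a hga hrp using hgmem
    have : ∀ i, ∃ b, Λ z b = Λ z (a i) ∧ ReachP Arc Z X z x b :=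
      fun i => ⟨a i, rfl, hrp i⟩
    refine no_many_reach_labels hsymm hlab huntangled hsol k z x
      (fun h => hXZ z h hz) (hflow z hz x (hXZ x hx))
      (fun i => Λ z (a i)) ?_ this
    intro i j hij
    simp only at hij
    apply hginj
    rw [← hga i, ← hga j, hij]
  have hGcard : ∀ x ∈ X, (Gx x).card ≤ k + 1 := by
    intro x hx
    simpa [hGx] using hcard_gen z₁ hz₁ x hx id Function.injective_id
  have hHcard : ∀ y ∈ X, (Hy y).card ≤ k + 1 := by
    intro y hy
    simpa [hHy] using hcard_gen z₂ hz₂ y hy (·⁻¹) inv_injective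
  set bigS : Finset Γ :=
    (X ×ˢ X).biUnion (fun xy => Finset.image₂ (· * ·) (Gx xy.1) (Hy xy.2)) with hbigS
  -- the "avoiding" labels
  set cProp : Γ → Prop := fun g => ∃ l : List V, (∀ v ∈ l, v ∉ Z) ∧ (∀ v ∈ l, v ∉ X) ∧
    List.Chain' Arc (z₁ :: l ++ [z₂]) ∧ chainProd Λ (z₁ :: l ++ [z₂]) = g with hcProp
  have hcsub : ∀ g g', cProp g → cProp g' → g = g' := by
    rintro g g' ⟨l, _, hlX, hlc, hlp⟩ ⟨l', _, hlX', hlc', hlp'⟩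
    rw [← hlp, ← hlp']
    exact walk_label_unique hsymm hlab X hsol z₁ z₂ hz₁X hz₂X l l' hlX hlX' hlc hlc'
  -- main dichotomy
  have hmem' : ∀ i, f i ∈ bigS ∨ cProp (f i) := by
    intro i
    obtain ⟨l, hlZ, hch, hnd, hpr⟩ := hfmem i
    by_cases hX : ∀ v ∈ l, v ∉ X
    · exact Or.inr ⟨l, hlZ, hX, hch, hpr⟩
    push_neg at hX
    obtain ⟨v0, hv0l, hv0X⟩ := hX
    left
    -- basic structure of the external path
    have hchain_split := List.isChain_append.1
      (show List.Chain' Arc ((z₁ :: l) ++ [z₂]) from hch)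
    have hch1 : List.Chain' Arc (z₁ :: l) := hchain_split.1
    have hch1' := List.isChain_cons.1 hch1
    have hchl : List.Chain' Arc l := hch1'.2
    have hndl : l.Nodup := by
      have : (z₁ :: l).Nodup := (List.nodup_append.1
        (show ((z₁ :: l) ++ [z₂]).Nodup from hnd)).1
      exact this.of_cons
    have hlne : l ≠ [] := fun h => by subst h; simp at hv0l
    obtain ⟨a, l'', rfl⟩ : ∃ a l'', l = a :: l'' := by
      cases l with
      | nil => exact absurd rfl hlne
      | cons a r => exact ⟨a, r, rfl⟩
    set l : List V := a :: l''
    have hha : l.head? = some a := rfl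
    obtain ⟨b, hlb⟩ : ∃ b, l.getLast? = some b := ⟨l.getLast (by simp [l]), List.getLast?_eq_getLast _⟩
    have harc_za : Arc z₁ a := hch1'.1 a rfl
    have harc_bz : Arc b z₂ := by
      have := hchain_split.2.2
      apply this
      · show b ∈ (z₁ :: l).getLast?
        have hgl : (z₁ :: l).getLast? = l.getLast? := by
          simp [l, List.getLast?_cons_cons]
        rw [hgl, hlb]; rfl
      · simp
    -- value of the label
    have hval : chainProd Λ (z₁ :: l ++ [z₂]) = Λ z₁ a * Λ b z₂ := by
      rw [show z₁ :: l ++ [z₂] = z₁ :: a :: (l'' ++ [z₂]) by simp [l],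
        chainProd_cons_cons,
        show a :: (l'' ++ [z₂]) = (a :: l'') ++ [z₂] from rfl,
        chainProd_concat Λ _ b z₂ hlb,
        chainProd_ones huntangled l hchl hlZ, one_mul]
    -- first cut vertex
    obtain ⟨s, x, t, hdec, hxX, hsX⟩ := exists_first_mem X l ⟨v0, hv0l, hv0X⟩
    have hGmem : Λ z₁ a ∈ Gx x := by
      rw [hGx]
      apply Finset.mem_image.2
      refine ⟨a, Finset.mem_filter.2 ⟨Finset.mem_univ _, ?_⟩, rfl⟩
      refine ⟨s ++ [x], ?_, List.getLast?_concat, ?_, ?_, ?_, ?_, harc_za⟩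
      · rw [show (s ++ [x]).head? = l.head? by rw [hdec]; cases s <;> simp]
        exact hha
      · have : List.Chain' Arc ((s ++ [x]) ++ t) := by
          rw [show (s ++ [x]) ++ t = l by rw [hdec]; simp]
          exact hchl
        exact (List.isChain_append.1 this).1
      · exact hndl.sublist (show (s ++ [x]) <+: l from ⟨t, by rw [hdec]; simp⟩).sublist
      · intro v hv
        apply hlZ
        rw [hdec]
        rcases List.mem_append.1 hv with h | h
        · simp [h]
        · simp at h; simp [h]
      · rw [List.dropLast_concat]
        exact hsX
    -- last cut vertex, via the reversed list
    obtain ⟨s', y, t', hdec', hyX, hsX'⟩ := exists_first_mem X l.reverse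
      ⟨v0, List.mem_reverse.2 hv0l, hv0X⟩
    have hHmem : (Λ z₂ b)⁻¹ ∈ Hy y := by
      rw [hHy]
      apply Finset.mem_image.2
      refine ⟨b, Finset.mem_filter.2 ⟨Finset.mem_univ _, ?_⟩, rfl⟩
      refine ⟨s' ++ [y], ?_, List.getLast?_concat, ?_, ?_, ?_, ?_, hsymm b z₂ harc_bz⟩
      · rw [show (s' ++ [y]).head? = l.reverse.head? by rw [hdec']; cases s' <;> simp]
        rw [List.head?_reverse]
        exact hlb
      · have : List.Chain' Arc ((s' ++ [y]) ++ t') := by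
          rw [show (s' ++ [y]) ++ t' = l.reverse by rw [hdec']; simp]
          exact chain'_reverse_arc hsymm hchl
        exact (List.isChain_append.1 this).1
      · exact (List.nodup_reverse.2 hndl).sublist
          (show (s' ++ [y]) <+: l.reverse from ⟨t', by rw [hdec']; simp⟩).sublist
      · intro v hv
        apply hlZ
        rw [← List.mem_reverse, hdec']
        rcases List.mem_append.1 hv with h | h
        · simp [h]
        · simp at h; simp [h]
      · rw [List.dropLast_concat]
        exact hsX'
    -- assemble
    rw [hbigS]
    apply Finset.mem_biUnion.2
    refine ⟨(x, y), Finset.mem_product.2 ⟨hxX, hyX⟩, ?_⟩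
    apply Finset.mem_image₂.2
    refine ⟨Λ z₁ a, hGmem, (Λ z₂ b)⁻¹, hHmem, ?_⟩
    rw [← hpr, hval, hlab b z₂ harc_bz]
  -- counting
  have hbigScard : bigS.card ≤ k * k * ((k + 1) * (k + 1)) := by
    calc bigS.card ≤ ∑ xy ∈ X ×ˢ X, (Finset.image₂ (· * ·) (Gx xy.1) (Hy xy.2)).card :=
          Finset.card_biUnion_le
      _ ≤ (X ×ˢ X).card * ((k + 1) * (k + 1)) := by
          rw [← smul_eq_mul]
          apply Finset.sum_le_card_nsmul
          intro xy hxy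
          have hxy' := Finset.mem_product.1 hxy
          calc (Finset.image₂ (· * ·) (Gx xy.1) (Hy xy.2)).card
              ≤ (Gx xy.1).card * (Hy xy.2).card := Finset.card_image₂_le _ _ _
            _ ≤ (k + 1) * (k + 1) :=
                Nat.mul_le_mul (hGcard xy.1 hxy'.1) (hHcard xy.2 hxy'.2)
      _ ≤ k * k * ((k + 1) * (k + 1)) := by
          rw [Finset.card_product]
          exact Nat.mul_le_mul_right _ (Nat.mul_le_mul hXcard hXcard)
  have hfinal : k ^ 3 * (k + 1) ^ 2 + 2 ≤ k * k * ((k + 1) * (k + 1)) + 1 := by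
    have himg : (Finset.univ.image f).card = k ^ 3 * (k + 1) ^ 2 + 2 := by
      rw [Finset.card_image_of_injective _ hfinj, Finset.card_univ, Fintype.card_fin]
    by_cases hex : ∃ i, cProp (f i)
    · obtain ⟨i₀, hi₀⟩ := hex
      have hsub : Finset.univ.image f ⊆ insert (f i₀) bigS := by
        apply Finset.image_subset_iff.2
        intro i _
        rcases hmem' i with h | h
        · exact Finset.mem_insert_of_mem h
        · exact Finset.mem_insert.2 (Or.inl (hcsub _ _ h hi₀))
      calc k ^ 3 * (k + 1) ^ 2 + 2 = (Finset.univ.image f).card := himg.symm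
        _ ≤ (insert (f i₀) bigS).card := Finset.card_le_card hsub
        _ ≤ bigS.card + 1 := Finset.card_insert_le _ _
        _ ≤ k * k * ((k + 1) * (k + 1)) + 1 := by omega
    · push_neg at hex
      have hsub : Finset.univ.image f ⊆ bigS := by
        apply Finset.image_subset_iff.2
        intro i _
        rcases hmem' i with h | h
        · exact h
        · exact absurd h (hex i)
      calc k ^ 3 * (k + 1) ^ 2 + 2 = (Finset.univ.image f).card := himg.symm
        _ ≤ bigS.card := Finset.card_le_card hsub
        _ ≤ k * k * ((k + 1) * (k + 1)) + 1 := by omega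
  -- arithmetic contradiction
  have harith : k * k * ((k + 1) * (k + 1)) ≤ k ^ 3 * (k + 1) ^ 2 := by
    have h1 : k * k * ((k + 1) * (k + 1)) = k ^ 2 * (k + 1) ^ 2 := by ring
    have h2 : k ^ 2 ≤ k ^ 3 := by
      rcases Nat.eq_zero_or_pos k with rfl | hk
      · simp
      · exact Nat.pow_le_pow_right hk (by omega)
    rw [h1]
    exact Nat.mul_le_mul_right _ h2
  omega
end

section
/- If a closed walk W in a Σ-labeled graph satisfies Λ(W) ≠ 1_Σ, then W contains a simple cycle C (a subcycle of the walk) with Λ(C) ≠ 1_Σ. -/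
lemma chainProd_split {V G : Type*} [Group G] (Λ : V → V → G) :
    ∀ (xs : List V) (v : V) (ys : List V),
      chainProd Λ (xs ++ v :: ys) = chainProd Λ (xs ++ [v]) * chainProd Λ (v :: ys) := by
  intro xs
  induction xs with
  | nil => intro v ys; simp [chainProd]
  | cons u xs ih =>
    intro v ys
    cases xs with
    | nil => cases ys <;> simp [chainProd]
    | cons w t =>
      have := ih v ys
      simp only [List.cons_append, List.append_eq, chainProd] at *
      rw [this, mul_assoc]

lemma chain'_split {V : Type*} {R : V → V → Prop} {xs : List V} {v : V} {ys : List V}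
    (h : List.Chain' R (xs ++ v :: ys)) :
    List.Chain' R (xs ++ [v]) ∧ List.Chain' R (v :: ys) := by
  unfold List.Chain' at h ⊢; rw [List.isChain_append] at h
  obtain ⟨h1, h2, h3⟩ := h
  refine ⟨?_, h2⟩
  rw [List.isChain_append]
  refine ⟨h1, List.isChain_singleton v, ?_⟩
  simpa using h3

lemma chain'_join {V : Type*} {R : V → V → Prop} {xs : List V} {v : V} {ys : List V}
    (h1 : List.Chain' R (xs ++ [v])) (h2 : List.Chain' R (v :: ys)) :
    List.Chain' R (xs ++ v :: ys) := by
  unfold List.Chain' at h1 h2 ⊢; rw [List.isChain_append] at h1 ⊢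
  obtain ⟨ha, _, hb⟩ := h1
  refine ⟨ha, h2, ?_⟩
  simpa using hb

lemma exists_dup_decomp {α : Type*} {l : List α} (h : ¬ l.Nodup) :
    ∃ (x : α) (xs ys zs : List α), l = xs ++ x :: (ys ++ x :: zs) := by
  induction l with
  | nil => simp at h
  | cons a t ih =>
    by_cases ha : a ∈ t
    · obtain ⟨ys, zs, rfl⟩ := List.append_of_mem ha
      exact ⟨a, [], ys, zs, by simp⟩
    · have ht : ¬ t.Nodup := fun hn => h (List.Nodup.cons ha hn)
      obtain ⟨x, xs, ys, zs, rfl⟩ := ih ht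
      exact ⟨x, a :: xs, ys, zs, rfl⟩

lemma aux_cycle {V Γ : Type*} [Group Γ]
    (Arc : V → V → Prop) (Λ : V → V → Γ) :
    ∀ (n : ℕ) (a : V) (rest : List V), rest.length ≤ n →
      List.Chain' Arc (a :: rest ++ [a]) →
      chainProd Λ (a :: rest ++ [a]) ≠ 1 →
      ∃ (b : V) (rest' : List V),
        (∀ w ∈ b :: rest', w ∈ a :: rest) ∧
        List.Chain' Arc (b :: rest' ++ [b]) ∧
        (b :: rest').Nodup ∧
        chainProd Λ (b :: rest' ++ [b]) ≠ 1 := by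
  intro n
  induction n with
  | zero =>
    intro a rest hlen hchain hnn
    have : rest = [] := List.eq_nil_of_length_eq_zero (Nat.le_zero.mp hlen)
    subst this
    exact ⟨a, [], fun w hw => hw, hchain, List.nodup_singleton a, hnn⟩
  | succ n ih =>
    intro a rest hlen hchain hnn
    by_cases hnd : (a :: rest).Nodup
    · exact ⟨a, rest, fun w hw => hw, hchain, hnd, hnn⟩
    · obtain ⟨x, xs, ys, zs, hdec⟩ := exists_dup_decomp hnd
      -- full walk : (a :: rest) ++ [a] = xs ++ x :: (ys ++ x :: (zs ++ [a]))
      have hfull : a :: rest ++ [a] = xs ++ x :: (ys ++ x :: (zs ++ [a])) := by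
        simp [hdec]
      -- split products
      have hprod : chainProd Λ (a :: rest ++ [a]) =
          chainProd Λ (xs ++ [x]) * (chainProd Λ (x :: ys ++ [x]) *
            chainProd Λ (x :: (zs ++ [a]))) := by
        rw [hfull, chainProd_split Λ xs x (ys ++ x :: (zs ++ [a]))]
        congr 1
        have := chainProd_split Λ (x :: ys) x (zs ++ [a])
        simpa using this
      -- split chains
      have hch1 : List.Chain' Arc (xs ++ [x]) ∧
          List.Chain' Arc (x :: (ys ++ x :: (zs ++ [a]))) := by
        rw [hfull] at hchain
        exact chain'_split hchain
      have hch2 : List.Chain' Arc (x :: ys ++ [x]) ∧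
          List.Chain' Arc (x :: (zs ++ [a])) := by
        have := hch1.2
        have h' : List.Chain' Arc ((x :: ys) ++ x :: (zs ++ [a])) := by simpa using this
        exact chain'_split h'
      -- lengths
      have hlenrest : rest.length = xs.length + ys.length + zs.length + 1 := by
        have := congrArg List.length hdec
        simp at this
        omega
      by_cases hB : chainProd Λ (x :: ys ++ [x]) = 1
      · -- remove loop : shorter walk xs ++ x :: zs ++ [a]
        have hprod2 : chainProd Λ (xs ++ x :: (zs ++ [a])) ≠ 1 := by
          rw [chainProd_split Λ xs x (zs ++ [a])]
          rw [hprod, hB, one_mul] at hnn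
          exact hnn
        have hch3 : List.Chain' Arc (xs ++ x :: (zs ++ [a])) :=
          chain'_join hch1.1 hch2.2
        -- write xs ++ x :: zs as a :: rest2
        obtain ⟨rest2, hr2⟩ : ∃ rest2, xs ++ x :: zs = a :: rest2 ∧
            rest2.length ≤ n ∧ ∀ w ∈ a :: rest2, w ∈ a :: rest := by
          cases xs with
          | nil =>
            have hx : a = x ∧ rest = ys ++ x :: zs := by
              simpa using hdec
            refine ⟨zs, by simp [hx.1], by omega, ?_⟩
            intro w hw
            rw [hx.2, ← hx.1]
            simp only [List.mem_cons, List.mem_append] at hw ⊢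
            tauto
          | cons c xs' =>
            have hc : a = c ∧ rest = xs' ++ x :: (ys ++ x :: zs) := by
              simpa using hdec
            refine ⟨xs' ++ x :: zs, by simp [← hc.1], ?_, ?_⟩
            · simp only [List.length_append, List.length_cons] at hlenrest ⊢
              omega
            · intro w hw
              rw [hc.2]
              simp only [List.mem_cons, List.mem_append] at hw ⊢
              tauto
        obtain ⟨hr2eq, hr2len, hr2sub⟩ := hr2
        have hkey : xs ++ x :: (zs ++ [a]) = a :: rest2 ++ [a] := by
          rw [← hr2eq]; simp
        rw [hkey] at hch3 hprod2
        have hch3' := hch3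
        have hprod2' := hprod2
        obtain ⟨b, rest', hsub, hc, hnd', hp⟩ := ih a rest2 hr2len hch3' hprod2'
        exact ⟨b, rest', fun w hw => hr2sub w (hsub w hw), hc, hnd', hp⟩
      · -- inner loop x :: ys ++ [x] is non-null
        have hchx : List.Chain' Arc (x :: ys ++ [x]) := hch2.1
        have hylen : ys.length ≤ n := by omega
        obtain ⟨b, rest', hsub, hc, hnd', hp⟩ := ih x ys hylen hchx hB
        refine ⟨b, rest', ?_, hc, hnd', hp⟩
        intro w hw
        have hwxy : w ∈ x :: ys := hsub w hw
        rw [hdec]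
        simp only [List.mem_cons, List.mem_append] at hwxy ⊢
        tauto

/-- If a closed walk `W` in a Σ-labeled graph has `Λ(W) ≠ 1`, then it contains a
simple non-null subcycle: a simple cycle whose vertices all lie on `W` and whose
label is not `1`. -/
theorem nonNull_closed_walk_has_nonNull_simple_cycle {V Γ : Type*} [Group Γ]
    (Arc : V → V → Prop) (Λ : V → V → Γ)
    (hsymm : ∀ u v, Arc u v → Arc v u)
    (hlab : ∀ u v, Arc u v → Λ u v = (Λ v u)⁻¹)
    (a : V) (rest : List V)
    (hchain : List.Chain' Arc (a :: rest ++ [a]))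
    (hnn : chainProd Λ (a :: rest ++ [a]) ≠ 1) :
    ∃ (b : V) (rest' : List V),
      (∀ w ∈ b :: rest', w ∈ a :: rest) ∧
      List.Chain' Arc (b :: rest' ++ [b]) ∧
      (b :: rest').Nodup ∧
      chainProd Λ (b :: rest' ++ [b]) ≠ 1 :=
  aux_cycle Arc Λ rest.length a rest le_rfl hchain hnn
end
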